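/- For every integer n ≥ 1: (i) [2,…,2, 3, 2, n+1], with exactly n−1 entries equal to 2 at the start, equals (3n² + 3n + 1)/(3n²); and (ii) [n+1, 4, 2,…,2], with exactly n−1 entries equal to 2 at the end, equals (3n² + 3n + 1)/(3n + 1). -/

import Mathlib

/-- Hirzebruch–Jung continued fraction `[x₁,…,x_r] = x₁ − 1/(x₂ − 1/(⋯ − 1/x_r))`. -/
def hjCF : List ℤ → ℚ
  | [] => 0
  | a :: l => (a : ℚ) - 1 / hjCF l

lemma hj_key (k : ℕ) : ∀ (l : List ℤ), 1 < hjCF l →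
    hjCF (List.replicate k 2 ++ l) =
      (((k : ℚ) + 1) * hjCF l - k) / ((k : ℚ) * hjCF l - ((k : ℚ) - 1)) := by
  induction k with
  | zero => intro l _; simp [hjCF]
  | succ k ih =>
    intro l hl
    have hx := ih l hl
    have hpos : 0 < (k : ℚ) * hjCF l - ((k : ℚ) - 1) := by
      have : (0:ℚ) ≤ (k:ℚ) := Nat.cast_nonneg k
      nlinarith
    have hnum : 0 < ((k : ℚ) + 1) * hjCF l - k := by
      have : (0:ℚ) ≤ (k:ℚ) := Nat.cast_nonneg k
      nlinarith
    rw [List.replicate_succ, List.cons_append]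
    simp only [hjCF, hx]
    push_cast
    have h1 := ne_of_gt hpos
    have h2 := ne_of_gt hnum
    have h3 : ((k:ℚ) + 1) * hjCF l - ((k:ℚ) + 1 - 1) ≠ 0 := ne_of_gt (by linarith)
    field_simp
    ring
  
lemma hj_rep (k : ℕ) (hk : 1 ≤ k) : hjCF (List.replicate k 2) = ((k : ℚ) + 1) / k := by
  induction k with
  | zero => omega
  | succ k ih =>
    rcases Nat.eq_zero_or_pos k with h | h
    · subst h; simp [hjCF]; norm_num
    · rw [List.replicate_succ]
      simp only [hjCF, ih h]
      have hk0 : (k : ℚ) ≠ 0 := Nat.cast_ne_zero.2 (by omega)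
      have hk1 : (k : ℚ) + 1 ≠ 0 := by positivity
      push_cast
      field_simp
      ring

theorem stmt16 (n : ℕ) (hn : 1 ≤ n) :
    hjCF (List.replicate (n - 1) (2 : ℤ) ++ [3, 2, (n : ℤ) + 1]) =
      (3 * (n : ℚ) ^ 2 + 3 * (n : ℚ) + 1) / (3 * (n : ℚ) ^ 2) ∧
    hjCF (((n : ℤ) + 1) :: (4 : ℤ) :: List.replicate (n - 1) (2 : ℤ)) =
      (3 * (n : ℚ) ^ 2 + 3 * (n : ℚ) + 1) / (3 * (n : ℚ) + 1) := by
  have hn1 : (1 : ℚ) ≤ (n : ℚ) := by exact_mod_cast hn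
  have hn0 : (n : ℚ) ≠ 0 := by linarith
  have h2n1 : 2 * (n : ℚ) + 1 ≠ 0 := by linarith
  have hnp1 : (n : ℚ) + 1 ≠ 0 := by linarith
  have hcast : ((n - 1 : ℕ) : ℚ) = (n : ℚ) - 1 := by
    rw [Nat.cast_sub hn]; norm_num
  constructor
  · have hx : hjCF [3, 2, (n : ℤ) + 1] = (5 * (n : ℚ) + 2) / (2 * (n : ℚ) + 1) := by
      simp only [hjCF]
      push_cast
      have h1 : (2 : ℚ) - 1 / ((n : ℚ) + 1 - 1 / 0) = (2 * n + 1) / (n + 1) := by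
        field_simp; ring
      rw [h1]
      have h2 : (2 * (n:ℚ) + 1) / ((n:ℚ) + 1) ≠ 0 := by
        apply div_ne_zero <;> [linarith; linarith]
      field_simp
      ring
    have hgt : 1 < hjCF [3, 2, (n : ℤ) + 1] := by
      rw [hx, lt_div_iff₀ (by linarith)]
      linarith
    rw [hj_key (n - 1) _ hgt, hx, hcast]
    have hden : ((n : ℚ) - 1) * ((5 * (n:ℚ) + 2) / (2 * (n:ℚ) + 1)) - ((n:ℚ) - 1 - 1) =
        3 * (n:ℚ)^2 / (2 * (n:ℚ) + 1) := by
      field_simp; ring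
    have hnum : ((n : ℚ) - 1 + 1) * ((5 * (n:ℚ) + 2) / (2 * (n:ℚ) + 1)) - ((n:ℚ) - 1) =
        (3 * (n:ℚ)^2 + 3 * (n:ℚ) + 1) / (2 * (n:ℚ) + 1) := by
      field_simp; ring
    rw [hnum, hden]
    have h3n : 3 * (n:ℚ)^2 ≠ 0 := by positivity
    field_simp
  · rcases Nat.lt_or_ge n 2 with h2 | h2
    · have : n = 1 := by omega
      subst this
      simp only [hjCF]
      norm_num [hjCF]
    · have hrep := hj_rep (n - 1) (by omega)
      rw [hcast] at hrep
      simp only [hjCF, hrep]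
      have hd1 : (n : ℚ) - 1 ≠ 0 := by
        have : (2:ℚ) ≤ (n:ℚ) := by exact_mod_cast h2
        linarith
      push_cast
      have h3 : ((n:ℚ) - 1 + 1) / ((n:ℚ) - 1) ≠ 0 := by
        apply div_ne_zero _ hd1
        linarith
      have h4 : 3 * (n:ℚ) + 1 ≠ 0 := by linarith
      have e1 : (4:ℚ) - 1 / (((n:ℚ) - 1 + 1) / ((n:ℚ) - 1)) = (3 * (n:ℚ) + 1) / n := by
        rw [one_div_div, sub_add_cancel]
        field_simp
        ring
      rw [e1, one_div_div]
      field_simp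
      ring
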